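/- Take A = (−1, 0), B = (1, 0), C = (−2, 0), D = (2, 0), k_A = k_B = −2/3, and k_C = k_D = 2/3. Then the set of complex solutions of System (*) is infinite. More precisely, for every (x, y) ∈ ℂ² with 2x²y² + 5(x² + y²) + 8 = 0 and x² + 1 ≠ 0, y² + 1 ≠ 0, x² + 4 ≠ 0, y² + 4 ≠ 0, the pair X = (0, x), Y = (0, y) is a complex solution of System (*), and there are infinitely many such pairs (x, y). -/

import Mathlib

/-- The complex quadratic form `q(u) = u₁² + u₂²` on `ℂ²`. -/
def qC (u : ℂ × ℂ) : ℂ := u.1 ^ 2 + u.2 ^ 2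

/-- The natural embedding of `ℝ²` into `ℂ²`. -/
def toC (P : ℝ × ℝ) : ℂ × ℂ := ((P.1 : ℂ), (P.2 : ℂ))

/-- `(X, Y) ∈ ℂ² × ℂ²` is a complex solution of System (*) for the configuration
`A, B, C, D` with constants `kA, kB, kC, kD`. -/
def IsComplexSol (A B C D : ℝ × ℝ) (kA kB kC kD : ℝ) (X Y : ℂ × ℂ) : Prop :=
  (qC (X - toC A) ≠ 0 ∧ qC (X - toC B) ≠ 0 ∧ qC (X - toC C) ≠ 0 ∧ qC (X - toC D) ≠ 0) ∧
  (qC (Y - toC A) ≠ 0 ∧ qC (Y - toC B) ≠ 0 ∧ qC (Y - toC C) ≠ 0 ∧ qC (Y - toC D) ≠ 0) ∧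
  1 / qC (X - toC A) + 1 / qC (Y - toC A) = (kA : ℂ) ∧
  1 / qC (X - toC B) + 1 / qC (Y - toC B) = (kB : ℂ) ∧
  1 / qC (X - toC C) + 1 / qC (Y - toC C) = (kC : ℂ) ∧
  1 / qC (X - toC D) + 1 / qC (Y - toC D) = (kD : ℂ)

theorem second_example_infinitely_many_solutions
    (A B C D : ℝ × ℝ) (kA kB kC kD : ℝ)
    (hA : A = ((-1 : ℝ), (0 : ℝ))) (hB : B = ((1 : ℝ), (0 : ℝ)))
    (hC : C = ((-2 : ℝ), (0 : ℝ))) (hD : D = ((2 : ℝ), (0 : ℝ)))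
    (hkA : kA = -(2 / 3)) (hkB : kB = -(2 / 3)) (hkC : kC = 2 / 3) (hkD : kD = 2 / 3) :
    -- the set of complex solutions of System (*) is infinite
    {XY : (ℂ × ℂ) × (ℂ × ℂ) |
      IsComplexSol A B C D kA kB kC kD XY.1 XY.2}.Infinite ∧
    -- every suitable (x, y) on the curve 2x²y² + 5(x² + y²) + 8 = 0 yields a solution
    (∀ x y : ℂ,
      2 * x ^ 2 * y ^ 2 + 5 * (x ^ 2 + y ^ 2) + 8 = 0 →
      x ^ 2 + 1 ≠ 0 → y ^ 2 + 1 ≠ 0 → x ^ 2 + 4 ≠ 0 → y ^ 2 + 4 ≠ 0 →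
      IsComplexSol A B C D kA kB kC kD ((0 : ℂ), x) ((0 : ℂ), y)) ∧
    -- and there are infinitely many such pairs (x, y)
    {xy : ℂ × ℂ |
      2 * xy.1 ^ 2 * xy.2 ^ 2 + 5 * (xy.1 ^ 2 + xy.2 ^ 2) + 8 = 0 ∧
      xy.1 ^ 2 + 1 ≠ 0 ∧ xy.2 ^ 2 + 1 ≠ 0 ∧
      xy.1 ^ 2 + 4 ≠ 0 ∧ xy.2 ^ 2 + 4 ≠ 0}.Infinite := by
  subst hA hB hC hD hkA hkB hkC hkD
  -- Part 2: the key verification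
  have key : ∀ x y : ℂ,
      2 * x ^ 2 * y ^ 2 + 5 * (x ^ 2 + y ^ 2) + 8 = 0 →
      x ^ 2 + 1 ≠ 0 → y ^ 2 + 1 ≠ 0 → x ^ 2 + 4 ≠ 0 → y ^ 2 + 4 ≠ 0 →
      IsComplexSol ((-1 : ℝ), (0 : ℝ)) ((1 : ℝ), (0 : ℝ)) ((-2 : ℝ), (0 : ℝ)) ((2 : ℝ), (0 : ℝ))
        (-(2/3)) (-(2/3)) (2/3) (2/3) ((0 : ℂ), x) ((0 : ℂ), y) := by
    intro x y hcurve hx1 hy1 hx4 hy4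
    have hx1' : (1 : ℂ) + x ^ 2 ≠ 0 := by rwa [add_comm]
    have hy1' : (1 : ℂ) + y ^ 2 ≠ 0 := by rwa [add_comm]
    have hx4' : (4 : ℂ) + x ^ 2 ≠ 0 := by rwa [add_comm]
    have hy4' : (4 : ℂ) + y ^ 2 ≠ 0 := by rwa [add_comm]
    refine ⟨⟨?_, ?_, ?_, ?_⟩, ⟨?_, ?_, ?_, ?_⟩, ?_, ?_, ?_, ?_⟩ <;>
      simp only [qC, toC, Prod.mk_sub_mk] <;> push_cast <;>
      [skip; skip; skip; skip; skip; skip; skip; skip;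
       (norm_num; field_simp;
        first | linear_combination hcurve | linear_combination -hcurve);
       (norm_num; field_simp;
        first | linear_combination hcurve | linear_combination -hcurve);
       (norm_num; field_simp;
        first | linear_combination hcurve | linear_combination -hcurve);
       (norm_num; field_simp;
        first | linear_combination hcurve | linear_combination -hcurve)] <;>
      (intro h;
       first
        | exact hx1 (by linear_combination h)
        | exact hy1 (by linear_combination h)
        | exact hx4 (by linear_combination h)
        | exact hy4 (by linear_combination h))
  -- Part 3: infinitely many pairs on the curve
  have hpairs : {xy : ℂ × ℂ |
      2 * xy.1 ^ 2 * xy.2 ^ 2 + 5 * (xy.1 ^ 2 + xy.2 ^ 2) + 8 = 0 ∧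
      xy.1 ^ 2 + 1 ≠ 0 ∧ xy.2 ^ 2 + 1 ≠ 0 ∧
      xy.1 ^ 2 + 4 ≠ 0 ∧ xy.2 ^ 2 + 4 ≠ 0}.Infinite := by
    set xf : ℕ → ℂ := fun n => ((n + 1 : ℕ) : ℂ) with hxf
    have hex : ∀ n : ℕ, ∃ z : ℂ,
        z ^ 2 = -(5 * xf n ^ 2 + 8) / (2 * xf n ^ 2 + 5) := fun n =>
      IsAlgClosed.exists_pow_nat_eq _ (by norm_num)
    set yf : ℕ → ℂ := fun n => Classical.choose (hex n) with hyf
    have hy : ∀ n : ℕ, yf n ^ 2 = -(5 * xf n ^ 2 + 8) / (2 * xf n ^ 2 + 5) :=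
      fun n => Classical.choose_spec (hex n)
    have hcastne : ∀ m : ℕ, 0 < m → ((m : ℂ)) ≠ 0 := fun m hm =>
      Nat.cast_ne_zero.mpr hm.ne'
    have hden : ∀ n : ℕ, 2 * xf n ^ 2 + 5 ≠ 0 := by
      intro n
      have h0 : 2 * xf n ^ 2 + 5 = ((2 * (n + 1) ^ 2 + 5 : ℕ) : ℂ) := by
        simp only [hxf]; push_cast; ring
      rw [h0]; exact hcastne _ (by positivity)
    have hx1 : ∀ n : ℕ, xf n ^ 2 + 1 ≠ 0 := by
      intro n
      have h0 : xf n ^ 2 + 1 = (((n + 1) ^ 2 + 1 : ℕ) : ℂ) := by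
        simp only [hxf]; push_cast; ring
      rw [h0]; exact hcastne _ (by positivity)
    have hx4 : ∀ n : ℕ, xf n ^ 2 + 4 ≠ 0 := by
      intro n
      have h0 : xf n ^ 2 + 4 = (((n + 1) ^ 2 + 4 : ℕ) : ℂ) := by
        simp only [hxf]; push_cast; ring
      rw [h0]; exact hcastne _ (by positivity)
    have hy1 : ∀ n : ℕ, yf n ^ 2 + 1 ≠ 0 := by
      intro n
      intro h
      rw [hy n] at h
      have h2 : -(5 * xf n ^ 2 + 8) + (2 * xf n ^ 2 + 5) = 0 := by
        field_simp [hden n] at h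
        rw [neg_add_eq_zero, div_eq_iff (by rw [mul_comm]; exact hden n)] at h; linear_combination -h
      have h3 : ((3 * (n + 1) ^ 2 + 3 : ℕ) : ℂ) = 0 := by
        simp only [hxf] at h2 ⊢; push_cast; push_cast at h2; first | linear_combination h2 | linear_combination -h2
      exact hcastne _ (by positivity) h3
    have hy4 : ∀ n : ℕ, yf n ^ 2 + 4 ≠ 0 := by
      intro n
      intro h
      rw [hy n] at h
      have h2 : -(5 * xf n ^ 2 + 8) + 4 * (2 * xf n ^ 2 + 5) = 0 := by
        field_simp [hden n] at h
        rw [neg_add_eq_zero, div_eq_iff (by rw [mul_comm]; exact hden n)] at h; linear_combination -h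
      have h3 : ((3 * (n + 1) ^ 2 + 12 : ℕ) : ℂ) = 0 := by
        simp only [hxf] at h2 ⊢; push_cast; push_cast at h2; linear_combination h2
      exact hcastne _ (by positivity) h3
    refine Set.infinite_of_injective_forall_mem (f := fun n : ℕ => (xf n, yf n)) ?_ ?_
    · intro n m hnm
      have h1 : xf n = xf m := congrArg Prod.fst hnm
      simp only [hxf] at h1
      exact_mod_cast Nat.succ_injective (by exact_mod_cast h1)
    · intro n
      refine ⟨?_, hx1 n, hy1 n, hx4 n, hy4 n⟩
      show 2 * xf n ^ 2 * yf n ^ 2 + 5 * (xf n ^ 2 + yf n ^ 2) + 8 = 0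
      rw [hy n]
      field_simp [hden n]
      ring
  refine ⟨?_, key, hpairs⟩
  -- Part 1 follows from parts 2 and 3
  have himg := hpairs.image (f := fun xy : ℂ × ℂ => ((((0 : ℂ), xy.1), ((0 : ℂ), xy.2)) :
      (ℂ × ℂ) × (ℂ × ℂ)))
    (by
      intro a _ b _ hab
      simp only [Prod.mk.injEq] at hab
      exact Prod.ext hab.1.2 hab.2.2)
  refine himg.mono ?_
  rintro _ ⟨xy, ⟨hc, h1, h2, h3, h4⟩, rfl⟩
  exact key xy.1 xy.2 hc h1 h2 h3 h4
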